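/- Let ℓ ≥ 2 and let σ be a permutation of Fin ℓ which is a cycle of length ℓ. Let k > 1 and let s be a positive integer such that s divides ℓ and ℓ/s divides k. Then the number C_s(σ^{⊙k}) of s-cycles in the cycle decomposition of σ^{⊙k} satisfies, as an identity of integers, (s * (ℓ + k)) * C_s(σ^{⊙k}) = ℓ * ∑_{e ∈ divisors of gcd(s, s*k/ℓ)} μ(e) * ((s + s*k/ℓ)/e).choose (s/e), where μ is the Möbius function. -/

import Mathlib

/-- The `k`-th symmetric tensor power of a permutation `σ` of `Fin n`: the permutation of
`Sym (Fin n) k` sending a multiset `m` to `Sym.map σ m`. -/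
def Equiv.Perm.symPow {n : ℕ} (σ : Equiv.Perm (Fin n)) (k : ℕ) :
    Equiv.Perm (Sym (Fin n) k) :=
  (Sym.equivCongr σ : Sym (Fin n) k ≃ Sym (Fin n) k)

/-- The number of fixed points of a permutation of a finite type. -/
def fixCount {α : Type*} [Fintype α] [DecidableEq α] (τ : Equiv.Perm α) : ℕ :=
  Fintype.card {x : α // τ x = x}

/-- `cycleCount τ s` is the number of cycles of length `s` in the cycle decomposition of `τ`;
for `s = 1` this is the number of fixed points. -/
def cycleCount {α : Type*} [Fintype α] [DecidableEq α] (τ : Equiv.Perm α) (s : ℕ) : ℕ :=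
  if s = 1 then fixCount τ
  else (τ.cycleFactorsFinset.filter (fun c => c.support.card = s)).card

open Equiv Equiv.Perm Function Finset

lemma minP_eq_card_support_cycleOf {α : Type*} [Fintype α] [DecidableEq α]
    (τ : Equiv.Perm α) {x : α} (hx : x ∈ τ.support) :
    Function.minimalPeriod ⇑τ x = (τ.cycleOf x).support.card := by
  have hmem : x ∈ (τ.cycleOf x).support :=
    mem_support_cycleOf_iff.2 ⟨SameCycle.refl _ _, hx⟩
  have key : ∀ n : ℕ, IsPeriodicPt ⇑τ n x ↔ (τ.cycleOf x).support.card ∣ n := by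
    intro n
    have : IsPeriodicPt ⇑τ n x ↔ (τ ^ n) x = x := by
      simp [IsPeriodicPt, IsFixedPt, iterate_eq_pow]
    rw [this]
    exact (τ.isCycleOn_support_cycleOf x).pow_apply_eq hmem
  exact Nat.dvd_antisymm
    ((isPeriodicPt_iff_minimalPeriod_dvd).1 ((key _).2 dvd_rfl))
    ((key _).1 (isPeriodicPt_minimalPeriod _ _))

lemma mul_cycleCount {α : Type*} [Fintype α] [DecidableEq α] (τ : Equiv.Perm α)
    {s : ℕ} (hs : 1 ≤ s) :
    s * cycleCount τ s = Nat.card {x : α // Function.minimalPeriod ⇑τ x = s} := by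
  rw [Nat.card_eq_fintype_card, Fintype.card_subtype]
  rcases eq_or_lt_of_le hs with h1 | h2
  · -- s = 1
    subst h1
    rw [cycleCount, if_pos rfl, one_mul, fixCount, Fintype.card_subtype]
    congr 1
    ext x
    simp only [mem_filter, mem_univ, true_and]
    rw [Function.minimalPeriod_eq_one_iff_isFixedPt]
    exact Iff.rfl
  · rw [cycleCount, if_neg (by omega)]
    have hdisj : ∀ c₁ ∈ τ.cycleFactorsFinset.filter (fun c => c.support.card = s),
        ∀ c₂ ∈ τ.cycleFactorsFinset.filter (fun c => c.support.card = s), c₁ ≠ c₂ →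
        Disjoint c₁.support c₂.support := by
      intro c₁ h₁ c₂ h₂ hne
      exact Equiv.Perm.disjoint_iff_disjoint_support.mp
        (τ.cycleFactorsFinset_pairwise_disjoint (mem_filter.1 h₁).1 (mem_filter.1 h₂).1 hne)
    have hset : (univ.filter fun x => Function.minimalPeriod ⇑τ x = s) =
        (τ.cycleFactorsFinset.filter (fun c => c.support.card = s)).biUnion
          (fun c => c.support) := by
      ext x
      simp only [mem_filter, mem_univ, true_and, mem_biUnion]
      constructor
      · intro hx
        have hxs : x ∈ τ.support := by
          by_contra h
          have : τ x = x := by simpa [Equiv.Perm.mem_support] using h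
          have := Function.minimalPeriod_eq_one_iff_isFixedPt.2 this
          omega
        refine ⟨τ.cycleOf x, ⟨cycleOf_mem_cycleFactorsFinset_iff.2 hxs, ?_⟩,
          mem_support_cycleOf_iff.2 ⟨SameCycle.refl _ _, hxs⟩⟩
        rw [← minP_eq_card_support_cycleOf τ hxs, hx]
      · rintro ⟨c, hc, hxc⟩
        have hxs : x ∈ τ.support := by
          rw [Equiv.Perm.mem_support]
          have hcx : c x ≠ x := (Equiv.Perm.mem_support).1 hxc
          rw [← (Equiv.Perm.mem_cycleFactorsFinset_iff.1 hc.1).2 x hxc]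
          exact hcx
        rw [minP_eq_card_support_cycleOf τ hxs, ← Equiv.Perm.cycle_is_cycleOf hxc hc.1]
        exact hc.2
    rw [hset, Finset.card_biUnion hdisj]
    rw [Finset.sum_congr rfl (fun c hc => (mem_filter.1 hc).2), Finset.sum_const, smul_eq_mul,
      mul_comm]

lemma sum_count_univ {α : Type*} [Fintype α] [DecidableEq α] (s : Multiset α) :
    ∑ a : α, Multiset.count a s = Multiset.card s := by
  rw [← Multiset.toFinset_sum_count_eq s]
  exact (Finset.sum_subset (Finset.subset_univ _) (fun a _ ha => by
    simpa [Multiset.count_eq_zero] using fun h => ha (Multiset.mem_toFinset.2 h))).symm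

lemma sum_count_nsmul_univ {α : Type*} [Fintype α] [DecidableEq α] (s : Multiset α) :
    ∑ a : α, Multiset.count a s • ({a} : Multiset α) = s := by
  conv_rhs => rw [← Multiset.toFinset_sum_count_nsmul_eq s]
  exact (Finset.sum_subset (Finset.subset_univ _) (fun a _ ha => by
    have : Multiset.count a s = 0 := by
      simpa [Multiset.count_eq_zero] using fun h => ha (Multiset.mem_toFinset.2 h)
    show Multiset.count a s • ({a} : Multiset α) = 0
    rw [this, zero_smul])).symm

def symCountsEquiv (α : Type*) [Fintype α] [DecidableEq α] (n : ℕ) :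
    Sym α n ≃ {c : α → ℕ // ∑ a, c a = n} where
  toFun m := ⟨fun a => Multiset.count a (m : Multiset α), by
    rw [sum_count_univ]; exact m.2⟩
  invFun c := ⟨∑ a, c.1 a • ({a} : Multiset α), by
    have hcard : ∀ (t : Finset α), Multiset.card (∑ a ∈ t, c.1 a • ({a} : Multiset α))
        = ∑ a ∈ t, c.1 a := by
      intro t
      induction t using Finset.induction with
      | empty => simp
      | @insert a t ha ih =>
        rw [Finset.sum_insert ha, Finset.sum_insert ha, Multiset.card_add, ih,
          Multiset.card_nsmul, Multiset.card_singleton, mul_one]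
    rw [hcard]; exact c.2⟩
  left_inv m := by
    apply Subtype.ext
    simpa using sum_count_nsmul_univ (m : Multiset α)
  right_inv c := by
    apply Subtype.ext
    funext a
    show Multiset.count a (∑ b : α, (c : α → ℕ) b • ({b} : Multiset α)) = (c : α → ℕ) a
    rw [Multiset.count_sum']
    simp [Multiset.count_singleton, Finset.sum_ite_eq]

lemma card_sum_eq {α : Type*} [Fintype α] [DecidableEq α] (n : ℕ) :
    Nat.card {c : α → ℕ // ∑ a, c a = n} = Nat.multichoose (Fintype.card α) n := by
  rw [← Nat.card_congr (symCountsEquiv α n), Nat.card_eq_fintype_card,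
    Sym.card_sym_eq_multichoose]

lemma symPow_pow_apply {n k : ℕ} (σ : Equiv.Perm (Fin n)) (d : ℕ) (m : Sym (Fin n) k) :
    ((σ.symPow k) ^ d) m = Sym.map ⇑(σ ^ d) m := by
  induction d generalizing m with
  | zero => simp [Sym.map_id']
  | succ d ih =>
    rw [pow_succ, Equiv.Perm.mul_apply]
    have h0 : (σ.symPow k) m = Sym.map ⇑σ m := rfl
    rw [h0, ih]
    have h1 : ⇑(σ ^ (d+1)) = ⇑(σ ^ d) ∘ ⇑σ := by
      funext a
      simp [pow_succ, Equiv.Perm.mul_apply]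
    rw [h1, ← Sym.map_map]

lemma sym_map_perm_eq_self_iff {α : Type*} [DecidableEq α] {k : ℕ} (ρ : Equiv.Perm α)
    (m : Sym α k) :
    Sym.map ⇑ρ m = m ↔ ∀ a, Multiset.count (ρ a) (m : Multiset α) = Multiset.count a (m : Multiset α) := by
  constructor
  · intro h a
    conv_lhs => rw [← h]
    rw [Sym.coe_map]
    exact Multiset.count_map_eq_count' _ _ ρ.injective a
  · intro h
    refine Sym.coe_injective ?_
    rw [Sym.coe_map]
    apply Multiset.ext.2
    intro a
    have hthis := h (ρ.symm a)
    rw [Equiv.apply_symm_apply] at hthis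
    conv_lhs => rw [← Equiv.apply_symm_apply ρ a]
    rw [Multiset.count_map_eq_count' _ _ ρ.injective]
    exact hthis.symm

lemma card_fixed_symPow (ℓ : ℕ) (hℓ : 2 ≤ ℓ) (σ : Equiv.Perm (Fin ℓ)) (hc : σ.IsCycle)
    (hsupp : σ.support.card = ℓ) (k d : ℕ) (hd : 0 < d) (hdl : d ∣ ℓ) :
    Nat.card {m : Sym (Fin ℓ) k // ((σ.symPow k) ^ d) m = m} =
      if ℓ / d ∣ k then Nat.multichoose d (k * d / ℓ) else 0 := by
  haveI : NeZero ℓ := ⟨by omega⟩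
  haveI : NeZero d := ⟨by omega⟩
  have hdle : d ≤ ℓ := Nat.le_of_dvd (by omega) hdl
  have hl : d * (ℓ / d) = ℓ := Nat.mul_div_cancel' hdl
  have horder : orderOf σ = ℓ := by rw [hc.orderOf, hsupp]
  obtain ⟨x0, hx0⟩ : ∃ x0, x0 ∈ σ.support := Finset.card_pos.mp (by omega)
  -- the parametrization E : ZMod ℓ ≃ Fin ℓ
  have hinj : Function.Injective (fun j : ZMod ℓ => (σ ^ j.val) x0) := by
    intro j₁ j₂ h
    have hpow : σ ^ j₁.val = σ ^ j₂.val := by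
      rw [hc.pow_eq_pow_iff]
      exact ⟨x0, Equiv.Perm.mem_support.1 hx0, h⟩
    have hmod := pow_eq_pow_iff_modEq.1 hpow
    rw [horder] at hmod
    have h1 : j₁.val < ℓ := ZMod.val_lt j₁
    have h2 : j₂.val < ℓ := ZMod.val_lt j₂
    have : j₁.val = j₂.val := by
      unfold Nat.ModEq at hmod
      rwa [Nat.mod_eq_of_lt h1, Nat.mod_eq_of_lt h2] at hmod
    exact ZMod.val_injective _ this
  set E : ZMod ℓ ≃ Fin ℓ := Equiv.ofBijective _
    ((Fintype.bijective_iff_injective_and_card _).2 ⟨hinj, by simp [ZMod.card]⟩) with hEdef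
  have hE : ∀ (j : ZMod ℓ) (a : ℕ), E (j + (a : ZMod ℓ)) = (σ ^ a) (E j) := by
    intro j a
    show (σ ^ (j + (a : ZMod ℓ)).val) x0 = (σ ^ a) ((σ ^ j.val) x0)
    have h1 : (σ ^ a) ((σ ^ j.val) x0) = (σ ^ (a + j.val)) x0 := by
      rw [pow_add, Equiv.Perm.mul_apply]
    rw [h1]
    have h2 : σ ^ ((j + (a : ZMod ℓ)).val) = σ ^ (a + j.val) := by
      rw [pow_eq_pow_iff_modEq, horder, ZMod.val_add, ZMod.val_natCast]
      calc (j.val + a % ℓ) % ℓ ≡ j.val + a % ℓ [MOD ℓ] := Nat.mod_modEq _ _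
        _ ≡ j.val + a [MOD ℓ] := Nat.ModEq.add_left _ (Nat.mod_modEq a ℓ)
        _ = a + j.val := by rw [add_comm]
    rw [h2]
  set π : ZMod ℓ →+* ZMod d := ZMod.castHom hdl (ZMod d) with hπdef
  have hπ : ∀ a : ℕ, π ((a : ℕ) : ZMod ℓ) = ((a : ℕ) : ZMod d) := fun a => map_natCast π a
  -- the product decomposition Φ
  have hΦinj : Function.Injective
      (fun p : ZMod d × Fin (ℓ / d) => ((p.1.val + p.2.val * d : ℕ) : ZMod ℓ)) := by
    intro p q h
    have hp1 : p.1.val < d := ZMod.val_lt p.1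
    have hq1 : q.1.val < d := ZMod.val_lt q.1
    have hp2 : p.2.val < ℓ / d := p.2.isLt
    have hq2 : q.2.val < ℓ / d := q.2.isLt
    have hb : ∀ (v j : ℕ), v < d → j < ℓ / d → v + j * d < ℓ := by
      intro v j hv hj
      have h1 : j * d ≤ (ℓ / d - 1) * d := Nat.mul_le_mul_right d (by omega)
      have h2 : (ℓ / d - 1) * d = ℓ - d := by
        rw [Nat.sub_mul, one_mul, mul_comm, hl]
      omega
    have h' : p.1.val + p.2.val * d = q.1.val + q.2.val * d := by
      have h2 : ((p.1.val + p.2.val * d : ℕ) : ZMod ℓ) = ((q.1.val + q.2.val * d : ℕ) : ZMod ℓ) := h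
      have hcast := congrArg ZMod.val h2
      rwa [ZMod.val_natCast, ZMod.val_natCast, Nat.mod_eq_of_lt (hb _ _ hp1 hp2),
        Nat.mod_eq_of_lt (hb _ _ hq1 hq2)] at hcast
    have hfst : p.1.val = q.1.val := by
      have e1 := congrArg (· % d) h'
      simpa [Nat.add_mul_mod_self_right, Nat.mod_eq_of_lt hp1, Nat.mod_eq_of_lt hq1] using e1
    have hsnd : p.2.val = q.2.val := by
      have h'' : p.2.val * d = q.2.val * d := by
        rw [hfst] at h'
        exact Nat.add_left_cancel h'
      exact Nat.eq_of_mul_eq_mul_right hd h''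
    exact Prod.ext (ZMod.val_injective _ hfst) (Fin.val_injective hsnd)
  set Φ : ZMod d × Fin (ℓ / d) ≃ ZMod ℓ := Equiv.ofBijective _
    ((Fintype.bijective_iff_injective_and_card _).2 ⟨hΦinj, by simp [ZMod.card, hl]⟩) with hΦdef
  have hπΦ : ∀ p : ZMod d × Fin (ℓ / d), π (Φ p) = p.1 := by
    intro p
    show π ((p.1.val + p.2.val * d : ℕ) : ZMod ℓ) = p.1
    rw [hπ]
    have h1 : ((p.1.val + p.2.val * d : ℕ) : ZMod d) = ((p.1.val : ℕ) : ZMod d) := by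
      push_cast [ZMod.natCast_self]
      ring
    rw [h1]
    exact ZMod.natCast_rightInverse p.1
  have hsum_fiber : ∀ c'' : ZMod d → ℕ,
      ∑ x : ZMod ℓ, c'' (π x) = (ℓ / d) * ∑ y : ZMod d, c'' y := by
    intro c''
    rw [← Equiv.sum_comp Φ (fun x => c'' (π x))]
    calc ∑ p : ZMod d × Fin (ℓ / d), c'' (π (Φ p))
        = ∑ p : ZMod d × Fin (ℓ / d), c'' p.1 :=
          Finset.sum_congr rfl (fun p _ => by rw [hπΦ])
      _ = (ℓ / d) * ∑ y : ZMod d, c'' y := by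
          rw [Fintype.sum_prod_type]
          simp [Finset.sum_const, Finset.card_univ, Finset.mul_sum, Finset.sum_mul, mul_comm]
  set ρ : Equiv.Perm (Fin ℓ) := σ ^ d with hρdef
  -- invariance iteration
  have hiter : ∀ (c : Fin ℓ → ℕ), (∀ a, c (ρ a) = c a) →
      ∀ (j : ZMod ℓ) (q : ℕ), c (E (j + ((q * d : ℕ) : ZMod ℓ))) = c (E j) := by
    intro c hcinv j q
    induction q with
    | zero => simp
    | succ q ih =>
      have h1 : ((q + 1) * d : ℕ) = (q * d) + d := by ring
      rw [h1, Nat.cast_add, ← add_assoc, hE, hcinv, ih]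
  have hfactor : ∀ (c : Fin ℓ → ℕ), (∀ a, c (ρ a) = c a) →
      ∀ x : ZMod ℓ, c (E x) = c (E (((π x).val : ℕ) : ZMod ℓ)) := by
    intro c hcinv x
    have hval : (π x).val = x.val % d := by
      conv_lhs => rw [← ZMod.natCast_rightInverse x]
      rw [hπ, ZMod.val_natCast]
    have hx : x = ((x.val % d : ℕ) : ZMod ℓ) + (((x.val / d) * d : ℕ) : ZMod ℓ) := by
      rw [← Nat.cast_add, Nat.mod_add_div']
      exact (ZMod.natCast_rightInverse x).symm
    rw [hval]
    conv_lhs => rw [hx]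
    exact hiter c hcinv _ _
  -- chain of equivalences
  have h1 : ∀ m : Sym (Fin ℓ) k, ((σ.symPow k) ^ d) m = m ↔ Sym.map ⇑ρ m = m := fun m => by
    rw [symPow_pow_apply]
  have e2 : {m : Sym (Fin ℓ) k // Sym.map ⇑ρ m = m} ≃
      {c : {c : Fin ℓ → ℕ // ∑ a, c a = k} // ∀ a, c.1 (ρ a) = c.1 a} :=
    (symCountsEquiv (Fin ℓ) k).subtypeEquiv (fun m => by
      rw [sym_map_perm_eq_self_iff]
      exact Iff.rfl)
  have e3 : {c : {c : Fin ℓ → ℕ // ∑ a, c a = k} // ∀ a, c.1 (ρ a) = c.1 a} ≃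
      {c'' : ZMod d → ℕ // (ℓ / d) * ∑ y, c'' y = k} :=
    { toFun := fun c => ⟨fun y => c.1.1 (E ((y.val : ℕ) : ZMod ℓ)), by
        have hsum := c.1.2
        have he1 : ∀ x : ZMod ℓ, c.1.1 (E x)
            = (fun y : ZMod d => c.1.1 (E ((y.val : ℕ) : ZMod ℓ))) (π x) :=
          fun x => hfactor c.1.1 c.2 x
        calc (ℓ / d) * ∑ y : ZMod d, c.1.1 (E ((y.val : ℕ) : ZMod ℓ))
            = ∑ x : ZMod ℓ, (fun y : ZMod d => c.1.1 (E ((y.val : ℕ) : ZMod ℓ))) (π x) :=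
              (hsum_fiber _).symm
          _ = ∑ x : ZMod ℓ, c.1.1 (E x) := Finset.sum_congr rfl (fun x _ => (he1 x).symm)
          _ = ∑ a : Fin ℓ, c.1.1 a := Equiv.sum_comp E _
          _ = k := hsum⟩,
      invFun := fun c'' => ⟨⟨fun a => c''.1 (π (E.symm a)), by
        calc ∑ a : Fin ℓ, c''.1 (π (E.symm a))
            = ∑ x : ZMod ℓ, c''.1 (π x) := by
              rw [← Equiv.sum_comp E (fun a => c''.1 (π (E.symm a)))]
              exact Finset.sum_congr rfl (fun x _ => by rw [Equiv.symm_apply_apply])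
          _ = (ℓ / d) * ∑ y : ZMod d, c''.1 y := hsum_fiber _
          _ = k := c''.2⟩, by
        intro a
        have hEq : ρ a = E (E.symm a + ((d : ℕ) : ZMod ℓ)) := by
          rw [hE, Equiv.apply_symm_apply]
        show c''.1 (π (E.symm (ρ a))) = c''.1 (π (E.symm a))
        rw [hEq, Equiv.symm_apply_apply]
        rw [map_add]
        have hd0 : π ((d : ℕ) : ZMod ℓ) = 0 := by rw [hπ, ZMod.natCast_self]
        rw [hd0, add_zero]⟩,
      left_inv := fun c => by
        apply Subtype.ext
        apply Subtype.ext
        funext a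
        show c.1.1 (E (((π (E.symm a)).val : ℕ) : ZMod ℓ)) = c.1.1 a
        rw [← hfactor c.1.1 c.2 (E.symm a), Equiv.apply_symm_apply],
      right_inv := fun c'' => by
        apply Subtype.ext
        funext y
        show c''.1 (π (E.symm (E ((y.val : ℕ) : ZMod ℓ)))) = c''.1 y
        rw [Equiv.symm_apply_apply, hπ]
        exact congrArg c''.1 (ZMod.natCast_rightInverse y) }
  rw [Nat.card_congr (((Equiv.subtypeEquivRight h1).trans e2).trans e3)]
  by_cases hdvd : ℓ / d ∣ k
  · rw [if_pos hdvd]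
    have hq : 0 < ℓ / d := Nat.div_pos hdle (by omega)
    have hkd : k * d / ℓ = k / (ℓ / d) := by
      conv_lhs => rw [← hl]
      rw [mul_comm k d, Nat.mul_div_mul_left _ _ (by omega : 0 < d)]
    rw [hkd]
    have hiff : ∀ S : ℕ, ((ℓ / d) * S = k ↔ S = k / (ℓ / d)) := by
      intro S
      constructor
      · intro h; rw [← h, Nat.mul_div_cancel_left _ hq]
      · intro h; rw [h, Nat.mul_div_cancel' hdvd]
    rw [Nat.card_congr (Equiv.subtypeEquivRight (fun c'' => hiff _))]
    rw [card_sum_eq, ZMod.card]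
  · rw [if_neg hdvd]
    haveI : IsEmpty {c'' : ZMod d → ℕ // (ℓ / d) * ∑ y, c'' y = k} :=
      ⟨fun c'' => hdvd ⟨_, c''.2.symm⟩⟩
    exact Nat.card_of_isEmpty

lemma card_fixed_eq_sum_divisors {α : Type*} [Fintype α] [DecidableEq α] (τ : Equiv.Perm α)
    {n : ℕ} (hn : 0 < n) :
    Nat.card {x : α // (τ ^ n) x = x} =
      ∑ i ∈ n.divisors, Nat.card {x : α // Function.minimalPeriod ⇑τ x = i} := by
  have hper : ∀ x : α, ((τ ^ n) x = x ↔ Function.minimalPeriod ⇑τ x ∣ n) := by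
    intro x
    rw [← Function.isPeriodicPt_iff_minimalPeriod_dvd]
    simp [Function.IsPeriodicPt, Function.IsFixedPt, Equiv.Perm.iterate_eq_pow]
  rw [Nat.card_eq_fintype_card, Fintype.card_subtype]
  rw [Finset.card_eq_sum_card_fiberwise
    (f := fun x => Function.minimalPeriod ⇑τ x) (t := n.divisors)
    (fun x hx => Nat.mem_divisors.2 ⟨(hper x).1 (Finset.mem_filter.1 hx).2, by omega⟩)]
  apply Finset.sum_congr rfl
  intro i hi
  rw [Nat.card_eq_fintype_card, Fintype.card_subtype]
  congr 1
  ext x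
  simp only [Finset.mem_filter, Finset.mem_univ, true_and]
  constructor
  · rintro ⟨_, h⟩; exact h
  · intro h; exact ⟨(hper x).2 (h ▸ (Nat.mem_divisors.1 hi).1), h⟩

lemma keybinom (ℓ k r u : ℕ) (hr : 0 < r) (hu : 0 < u) (hrk : (ℓ + k) * r = ℓ * (r + u)) :
    (ℓ + k) * Nat.multichoose r u = ℓ * ((r + u).choose r) := by
  have hmc : Nat.multichoose r u = (r + u - 1).choose u := Nat.multichoose_eq r u
  have hch : (r + u) * ((r + u - 1).choose (r - 1)) = ((r + u).choose r) * r := by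
    have h := Nat.add_one_mul_choose_eq (r + u - 1) (r - 1)
    have e1 : r + u - 1 + 1 = r + u := by omega
    have e2 : r - 1 + 1 = r := by omega
    rwa [e1, e2] at h
  have hsymm : (r + u - 1).choose (r - 1) = (r + u - 1).choose u := by
    have h1 : (r + u - 1) - u = r - 1 := by omega
    rw [← h1]
    exact Nat.choose_symm (by omega)
  have hmain : ((ℓ + k) * Nat.multichoose r u) * r = (ℓ * ((r + u).choose r)) * r := by
    rw [hmc, ← hsymm]
    calc (ℓ + k) * ((r + u - 1).choose (r - 1)) * r
        = ((ℓ + k) * r) * ((r + u - 1).choose (r - 1)) := by ring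
      _ = (ℓ * (r + u)) * ((r + u - 1).choose (r - 1)) := by rw [hrk]
      _ = ℓ * ((r + u) * ((r + u - 1).choose (r - 1))) := by ring
      _ = ℓ * (((r + u).choose r) * r) := by rw [hch]
      _ = (ℓ * ((r + u).choose r)) * r := by ring
  exact Nat.eq_of_mul_eq_mul_right hr hmain

lemma divisors_gcd_eq (s t : ℕ) (hs : s ≠ 0) :
    (Nat.gcd s t).divisors = s.divisors.filter (· ∣ t) := by
  ext e
  simp only [Nat.mem_divisors, Finset.mem_filter, Nat.dvd_gcd_iff]
  constructor
  · rintro ⟨⟨h1, h2⟩, h3⟩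
    exact ⟨⟨h1, hs⟩, h2⟩
  · rintro ⟨⟨h1, _⟩, h2⟩
    refine ⟨⟨h1, h2⟩, ?_⟩
    simp [Nat.gcd_eq_zero_iff, hs]

lemma term_eval (ℓ s k ℓ' k' e : ℕ) (hs1 : 0 < s) (he : e ∣ s)
    (hℓfact : ℓ = s * ℓ') (hkfact : k = ℓ' * k') (hℓ' : 0 < ℓ') :
    (if ℓ / (s / e) ∣ k then Nat.multichoose (s / e) (k * (s / e) / ℓ) else 0)
      = if e ∣ k' then Nat.multichoose (s / e) (k' / e) else 0 := by
  obtain ⟨r, hr⟩ := he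
  have he0 : 0 < e := by
    rcases Nat.eq_zero_or_pos e with h | h
    · subst h; simp at hr; omega
    · exact h
  have hr0 : 0 < r := by
    rcases Nat.eq_zero_or_pos r with h | h
    · subst h; simp at hr; omega
    · exact h
  have hse : s / e = r := by rw [hr, Nat.mul_div_cancel_left _ he0]
  rw [hse]
  have hcond : (ℓ / r ∣ k) ↔ e ∣ k' := by
    have hlr : ℓ / r = e * ℓ' := by
      rw [hℓfact, hr]
      have : e * r * ℓ' = r * (e * ℓ') := by ring
      rw [this, Nat.mul_div_cancel_left _ hr0]
    rw [hlr, hkfact, show e * ℓ' = ℓ' * e by ring]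
    exact mul_dvd_mul_iff_left (by omega : ℓ' ≠ 0)
  have hval : k * r / ℓ = k' / e := by
    rw [hkfact, hℓfact, hr]
    have h1 : ℓ' * k' * r = (ℓ' * r) * k' := by ring
    have h2 : e * r * ℓ' = (ℓ' * r) * e := by ring
    rw [h1, h2, Nat.mul_div_mul_left _ _ (by positivity)]
  simp only [hcond, hval]

/-- Möbius-inversion formula for the number of `s`-cycles of the symmetric tensor power of a
full cycle on `Fin ℓ`, in the case `s ∣ ℓ` and `ℓ/s ∣ k`. -/
theorem cycleCount_symPow_fullCycle (ℓ : ℕ) (hℓ : 2 ≤ ℓ) (σ : Equiv.Perm (Fin ℓ))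
    (hc : σ.IsCycle) (hs : σ.support.card = ℓ) (k s : ℕ) (hk : 1 < k) (hs1 : 0 < s)
    (hsl : s ∣ ℓ) (hlk : ℓ / s ∣ k) :
    ((s : ℤ) * (ℓ + k)) * (cycleCount (σ.symPow k) s : ℤ) =
      (ℓ : ℤ) * ∑ e ∈ (Nat.gcd s (s * k / ℓ)).divisors,
        (ArithmeticFunction.moebius e) * (((s + s * k / ℓ) / e).choose (s / e) : ℤ) := by
  classical
  set τ := σ.symPow k with hτdef
  have hℓ0 : 0 < ℓ := by omega
  set ℓ' := ℓ / s with hℓ'def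
  have hℓfact : ℓ = s * ℓ' := (Nat.mul_div_cancel' hsl).symm
  have hℓ'pos : 0 < ℓ' := by
    rcases Nat.eq_zero_or_pos ℓ' with h | h
    · rw [h, mul_zero] at hℓfact; omega
    · exact h
  obtain ⟨k', hkfact⟩ := hlk
  have hk'pos : 0 < k' := by
    rcases Nat.eq_zero_or_pos k' with h | h
    · rw [h, mul_zero] at hkfact; omega
    · exact h
  have htk' : s * k / ℓ = k' := by
    rw [hkfact]
    conv_lhs => rw [hℓfact]
    have h1 : s * (ℓ' * k') = (s * ℓ') * k' := by ring
    rw [h1, Nat.mul_div_cancel_left _ (by positivity)]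
  rw [htk']
  -- Möbius inversion
  have hrel : ∀ n, 0 < n → n ∈ {n : ℕ | n ∣ ℓ} →
      ∑ i ∈ n.divisors,
          (Nat.card {m : Sym (Fin ℓ) k // Function.minimalPeriod ⇑τ m = i} : ℤ)
        = (Nat.card {m : Sym (Fin ℓ) k // (τ ^ n) m = m} : ℤ) := by
    intro n hn _
    exact_mod_cast (card_fixed_eq_sum_divisors τ hn).symm
  have hinv := (ArithmeticFunction.sum_eq_iff_sum_smul_moebius_eq_on {n : ℕ | n ∣ ℓ}
      (fun m n hmn hn => hmn.trans hn)).1 hrel s hs1 hsl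
  rw [Nat.sum_divisorsAntidiagonal
    (fun e d => (ArithmeticFunction.moebius e : ℤ) •
      (Nat.card {m : Sym (Fin ℓ) k // (τ ^ d) m = m} : ℤ))] at hinv
  have hterm : ∀ e ∈ s.divisors,
      (ArithmeticFunction.moebius e : ℤ) •
          (Nat.card {m : Sym (Fin ℓ) k // (τ ^ (s / e)) m = m} : ℤ)
        = if e ∣ k' then
            (ArithmeticFunction.moebius e : ℤ) * (Nat.multichoose (s / e) (k' / e) : ℤ)
          else 0 := by
    intro e hee
    obtain ⟨hes, hs0⟩ := Nat.mem_divisors.1 hee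
    have he0 : 0 < e := by
      rcases Nat.eq_zero_or_pos e with h | h
      · subst h; simp at hes; omega
      · exact h
    have hd0 : 0 < s / e := Nat.div_pos (Nat.le_of_dvd hs1 hes) he0
    have hdl : s / e ∣ ℓ := (Nat.div_dvd_of_dvd hes).trans hsl
    rw [card_fixed_symPow ℓ hℓ σ hc hs k (s / e) hd0 hdl,
      term_eval ℓ s k ℓ' k' e hs1 hes hℓfact hkfact hℓ'pos]
    by_cases h : e ∣ k'
    · simp [h, smul_eq_mul]
    · simp [h]
  rw [Finset.sum_congr rfl hterm, ← Finset.sum_filter,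
    ← divisors_gcd_eq s k' (by omega)] at hinv
  have hA : (s : ℤ) * (cycleCount τ s : ℤ)
      = (Nat.card {m : Sym (Fin ℓ) k // Function.minimalPeriod ⇑τ m = s} : ℤ) := by
    exact_mod_cast mul_cycleCount τ hs1
  calc ((s : ℤ) * ((ℓ : ℤ) + (k : ℤ))) * (cycleCount τ s : ℤ)
      = ((ℓ : ℤ) + (k : ℤ)) * ((s : ℤ) * (cycleCount τ s : ℤ)) := by ring
    _ = ((ℓ : ℤ) + (k : ℤ)) * ∑ e ∈ (Nat.gcd s k').divisors,
          (ArithmeticFunction.moebius e : ℤ) * (Nat.multichoose (s / e) (k' / e) : ℤ) := by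
        rw [hA, ← hinv]
    _ = ∑ e ∈ (Nat.gcd s k').divisors,
          (ArithmeticFunction.moebius e : ℤ) *
            (((ℓ : ℤ) + (k : ℤ)) * (Nat.multichoose (s / e) (k' / e) : ℤ)) := by
        rw [Finset.mul_sum]
        exact Finset.sum_congr rfl (fun e _ => by ring)
    _ = ∑ e ∈ (Nat.gcd s k').divisors,
          (ArithmeticFunction.moebius e : ℤ) *
            ((ℓ : ℤ) * (((s + k') / e).choose (s / e) : ℤ)) := by
        apply Finset.sum_congr rfl
        intro e hee
        have he : e ∣ Nat.gcd s k' := (Nat.mem_divisors.1 hee).1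
        obtain ⟨r, hr⟩ := he.trans (Nat.gcd_dvd_left _ _)
        obtain ⟨u, hu⟩ := he.trans (Nat.gcd_dvd_right _ _)
        have he0 : 0 < e := by
          rcases Nat.eq_zero_or_pos e with h | h
          · subst h; simp at hr; omega
          · exact h
        have hr0 : 0 < r := by
          rcases Nat.eq_zero_or_pos r with h | h
          · subst h; simp at hr; omega
          · exact h
        have hu0 : 0 < u := by
          rcases Nat.eq_zero_or_pos u with h | h
          · subst h; simp at hu; omega
          · exact h
        have h1 : s / e = r := by rw [hr, Nat.mul_div_cancel_left _ he0]
        have h2 : k' / e = u := by rw [hu, Nat.mul_div_cancel_left _ he0]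
        have h3 : (s + k') / e = r + u := by
          rw [hr, hu, ← Nat.mul_add, Nat.mul_div_cancel_left _ he0]
        have hrk : (ℓ + k) * r = ℓ * (r + u) := by
          have hkr : k * r = ℓ * u := by
            rw [hkfact]
            conv_rhs => rw [hℓfact]
            rw [hr, hu]
            ring
          calc (ℓ + k) * r = ℓ * r + k * r := by ring
            _ = ℓ * r + ℓ * u := by rw [hkr]
            _ = ℓ * (r + u) := by ring
        have hkey := keybinom ℓ k r u hr0 hu0 hrk
        rw [h1, h2, h3]
        congr 1 -- may be a no-op
        exact_mod_cast congrArg (Nat.cast (R := ℤ)) hkey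
    _ = (ℓ : ℤ) * ∑ e ∈ (Nat.gcd s k').divisors,
          (ArithmeticFunction.moebius e : ℤ) * (((s + k') / e).choose (s / e) : ℤ) := by
        rw [Finset.mul_sum]
        exact Finset.sum_congr rfl (fun e _ => by ring)
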